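/- Let L be a countable first-order language and let M be a countably infinite, locally finite, ultrahomogeneous L-structure (i.e., M is the Fraïssé limit of its age). Then the following are equivalent: (i) the automorphism group Aut(M) has the finite algebraic closure property, i.e., for every finite set S ⊆ M the set {b ∈ M : the orbit of b under the pointwise stabilizer Aut(M)_(S) is finite} is finite; (ii) the age of M has the cofinal strong amalgamation property (CSAP), i.e., for every finitely generated substructure B₀ of M there exist a finitely generated substructure B of M and an embedding B₀ → B such that the strong amalgamation property holds over B: for every pair of finitely generated substructures C, D of M and all embeddings ψ : B → C and χ : B → D there exist a finitely generated substructure E of M and embeddings ψ' : C → E and χ' : D → E such that ψ' ∘ ψ = χ' ∘ χ and range(ψ') ∩ range(χ') = range(ψ' ∘ ψ). -/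

import Mathlib

open FirstOrder
open scoped Pointwise

section Neumann
variable {G Ω : Type*} [Group G] [MulAction G Ω]

/-- B. H. Neumann's separation lemma. -/
theorem neumann_sep {A B : Set Ω} (hA : A.Finite) (hB : B.Finite)
    (h : ∀ a ∈ A, (MulAction.orbit G a).Infinite) : ∃ g : G, ∀ a ∈ A, g • a ∉ B := by
  classical
  by_contra hc
  push_neg at hc
  set s : Finset (Ω × Ω) := hA.toFinset ×ˢ hB.toFinset with hs
  set H : Ω × Ω → Subgroup G := fun i => MulAction.stabilizer G i.1 with hH
  set g : Ω × Ω → G := fun i => if hex : ∃ u : G, u • i.1 = i.2 then hex.choose else 1 with hgdef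
  have hcovers : ⋃ i ∈ s, (g i) • (H i : Set G) = Set.univ := by
    ext x
    simp only [Set.mem_univ, iff_true, Set.mem_iUnion]
    obtain ⟨a, ha, hb⟩ := hc x
    obtain ⟨b, hbB, hxb⟩ : ∃ b ∈ B, x • a = b := ⟨_, hb, rfl⟩
    have hex : ∃ u : G, u • a = b := ⟨x, hxb⟩
    refine ⟨(a, b), ?_, ?_⟩
    · simp [hs, Set.Finite.mem_toFinset, ha, hbB]
    · have hge : g (a, b) • a = b := by
        simp only [hgdef, hex, dif_pos]
        exact hex.choose_spec
      refine ⟨(g (a, b))⁻¹ * x, ?_, by simp⟩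
      show ((g (a, b))⁻¹ * x) • a = a
      calc ((g (a, b))⁻¹ * x) • a = (g (a, b))⁻¹ • (x • a) := mul_smul _ _ _
        _ = (g (a, b))⁻¹ • (g (a, b) • a) :=
            congrArg (fun y => (g (a, b))⁻¹ • y) (hxb.trans hge.symm)
        _ = a := inv_smul_smul _ _
  obtain ⟨k, hks, hkfi⟩ := Subgroup.exists_finiteIndex_of_leftCoset_cover hcovers
  have hk1 : k.1 ∈ A := by
    simp only [hs, Finset.mem_product, Set.Finite.mem_toFinset] at hks
    exact hks.1
  have hio : (MulAction.stabilizer G k.1).index = 0 := by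
    rw [MulAction.index_stabilizer]
    exact (h k.1 hk1).ncard
  exact hkfi.index_ne_zero hio

/-- Orbits under a smaller subgroup stay infinite when the subgroup is cut out by
fixing a finite invariant set pointwise. -/
theorem orbit_infinite_sub (K H : Subgroup G) (T : Set Ω) (hT : T.Finite)
    (hmem : ∀ u ∈ K, (∀ t ∈ T, u • t = t) → u ∈ H)
    (hmapsto : ∀ u ∈ K, ∀ t ∈ T, u • t ∈ T)
    (d : Ω) (hinf : (MulAction.orbit K d).Infinite) : (MulAction.orbit H d).Infinite := by
  classical
  have : Finite ↥T := hT.to_subtype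
  set S₀ : Set (↥T → Ω) := Set.univ.pi (fun _ : ↥T => T) with hS₀
  have hS₀fin : S₀.Finite := Set.Finite.pi fun _ => hT
  set r : ↥K → (↥T → Ω) := fun u t => (u : G) • (t : Ω) with hr
  have hcover : MulAction.orbit K d ⊆
      ⋃ v ∈ S₀, {x | ∃ u : ↥K, r u = v ∧ (u : G) • d = x} := by
    rintro x ⟨u, rfl⟩
    exact Set.mem_biUnion (fun t _ => hmapsto u u.2 t t.2) ⟨u, rfl, rfl⟩
  have : ∃ v ∈ S₀, {x | ∃ u : ↥K, r u = v ∧ (u : G) • d = x}.Infinite := by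
    by_contra hall
    push_neg at hall
    exact hinf (Set.Finite.subset (Set.Finite.biUnion hS₀fin hall) hcover)
  obtain ⟨v, hv, hW⟩ := this
  obtain ⟨x₀, u₀, hu₀, hx₀⟩ := hW.nonempty
  refine Set.Infinite.mono ?_ (hW.image (Set.injOn_of_injective
    (MulAction.injective ((u₀ : G)⁻¹)) ))
  rintro y ⟨x, ⟨u, hu, rfl⟩, rfl⟩
  have hmem' : (u₀ : G)⁻¹ * (u : G) ∈ H := by
    refine hmem _ (mul_mem (inv_mem u₀.2) u.2) fun t ht => ?_
    have h1 : (u : G) • t = v ⟨t, ht⟩ := congr_fun hu ⟨t, ht⟩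
    have h2 : (u₀ : G) • t = v ⟨t, ht⟩ := congr_fun hu₀ ⟨t, ht⟩
    rw [mul_smul, h1, ← h2, inv_smul_smul]
  exact ⟨⟨_, hmem'⟩, show ((u₀ : G)⁻¹ * (u : G)) • d = (u₀ : G)⁻¹ • ((u : G) • d) from
    mul_smul _ _ _⟩

end Neumann

section AutFix

open FirstOrder.Language

variable {L : FirstOrder.Language} {M : Type*} [L.Structure M]

/-- The subgroup of permutations of `M` which are `L`-automorphisms and fix `T` pointwise. -/
def autFix (L : FirstOrder.Language) {M : Type*} [L.Structure M] (T : Set M) :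
    Subgroup (Equiv.Perm M) where
  carrier := {f | (∃ e : M ≃[L] M, ∀ x, e x = f x) ∧ ∀ t ∈ T, f t = t}
  one_mem' := ⟨⟨Language.Equiv.refl L M, fun _ => rfl⟩, fun _ _ => rfl⟩
  mul_mem' := by
    rintro f g ⟨⟨e, he⟩, hf⟩ ⟨⟨e', he'⟩, hg⟩
    refine ⟨⟨e.comp e', fun x => ?_⟩, fun t ht => ?_⟩
    · simp [he, he', Equiv.Perm.mul_apply]
    · simp [Equiv.Perm.mul_apply, hg t ht, hf t ht]
  inv_mem' := by
    rintro f ⟨⟨e, he⟩, hf⟩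
    refine ⟨⟨e.symm, fun x => ?_⟩, fun t ht => ?_⟩
    · have h1 : f (e.symm x) = x := by rw [← he, Language.Equiv.apply_symm_apply]
      calc e.symm x = f⁻¹ (f (e.symm x)) := by simp
        _ = f⁻¹ x := by rw [h1]
    · nth_rewrite 1 [← hf t ht]; simp

theorem orb_eq (T : Set M) (b : M) :
    {c : M | ∃ g : M ≃[L] M, (∀ s ∈ T, g s = s) ∧ g b = c} =
      MulAction.orbit (autFix L T) b := by
  ext c
  constructor
  · rintro ⟨g, hg, rfl⟩
    exact ⟨⟨g.toEquiv, ⟨⟨g, fun _ => rfl⟩, hg⟩⟩, rfl⟩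
  · rintro ⟨⟨f, ⟨⟨e, he⟩, hf⟩⟩, rfl⟩
    exact ⟨e, fun s hs => (he s).trans (hf s hs), he b⟩

end AutFix

open FirstOrder.Language

/-- For a countably infinite, locally finite, ultrahomogeneous structure `M` in a countable
language `L` (i.e. a locally finite Fraïssé limit), the automorphism group `Aut(M)` has the
finite algebraic closure property iff the age of `M` has the cofinal strong amalgamation
property (stated via finitely generated substructures of `M`, which represent the age up to
isomorphism). -/
theorem stmt_10 {L : FirstOrder.Language} [Countable L.Symbols]
    {M : Type*} [L.Structure M] [Countable M] [Infinite M]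
    (hlf : ∀ S : L.Substructure M, S.FG → (S : Set M).Finite)
    (huh : L.IsUltrahomogeneous M) :
    (∀ S : Set M, S.Finite →
      {b : M | {c : M | ∃ g : M ≃[L] M, (∀ s ∈ S, g s = s) ∧ g b = c}.Finite}.Finite) ↔
    (∀ B₀ : L.Substructure M, B₀.FG →
      ∃ B : L.Substructure M, B.FG ∧ (∃ _φ₀ : B₀ ↪[L] B, True) ∧
        ∀ C D : L.Substructure M, C.FG → D.FG →
          ∀ (ψ : B ↪[L] C) (χ : B ↪[L] D),
            ∃ (E : L.Substructure M) (_ : E.FG) (ψ' : C ↪[L] E) (χ' : D ↪[L] E),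
              ψ'.comp ψ = χ'.comp χ ∧
              Set.range ⇑ψ' ∩ Set.range ⇑χ' = Set.range ⇑(ψ'.comp ψ)) := by
  constructor
  · -- finite acl ⇒ CSAP
    intro hacl B₀ hB₀fg
    classical
    have hSfin : ((B₀ : Set M)).Finite := hlf B₀ hB₀fg
    set S : Set M := (B₀ : Set M) with hSdef
    set K : Subgroup (Equiv.Perm M) := autFix L S with hK
    set Acl : Set M := {b : M | (MulAction.orbit K b).Finite} with hAcldef
    have hAclfin : Acl.Finite := by
      simpa only [orb_eq] using hacl S hSfin
    have hSAcl : S ⊆ Acl := by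
      intro s hs
      have hsub : MulAction.orbit K s ⊆ {s} := by
        rintro c ⟨⟨f, hfK⟩, rfl⟩
        exact hfK.2 s hs
      exact (Set.finite_singleton s).subset hsub
    have hinv : ∀ u ∈ K, ∀ t ∈ Acl, u • t ∈ Acl := by
      intro u hu t ht
      show (MulAction.orbit K (u • t)).Finite
      rw [show u • t = (⟨u, hu⟩ : K) • t from rfl, MulAction.orbit_smul]
      exact ht
    have hfun : ∀ {n} (f : L.Functions n) (x : Fin n → M), (∀ i, x i ∈ Acl) →
        Structure.funMap f x ∈ Acl := by
      intro n f x hx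
      show (MulAction.orbit K (Structure.funMap f x)).Finite
      have hsub : MulAction.orbit K (Structure.funMap f x) ⊆
          (fun y : Fin n → M => Structure.funMap f y) ''
            (Set.univ.pi fun i => MulAction.orbit K (x i)) := by
        rintro c ⟨⟨u, hu⟩, rfl⟩
        refine ⟨fun i => u (x i), fun i _ => ⟨⟨u, hu⟩, rfl⟩, ?_⟩
        obtain ⟨⟨e, he⟩, -⟩ := hu
        show Structure.funMap f (fun i => u (x i)) = u (Structure.funMap f x)
        calc Structure.funMap f (fun i => u (x i))
            = Structure.funMap f (⇑e ∘ x) := by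
              congr 1; funext i; exact (he (x i)).symm
          _ = e (Structure.funMap f x) := (HomClass.map_fun e f x).symm
          _ = u (Structure.funMap f x) := he _
      exact ((Set.Finite.pi fun i => hx i).image _).subset hsub
    set B : L.Substructure M := ⟨Acl, hfun⟩ with hBdef
    have hBcar : (B : Set M) = Acl := rfl
    have hBfg : B.FG := Substructure.fg_def.2 ⟨Acl, hAclfin, B.closure_eq⟩
    refine ⟨B, hBfg, ⟨Substructure.inclusion (fun x hx => hSAcl hx), trivial⟩, ?_⟩
    intro C D hCfg hDfg ψ χ
    obtain ⟨g, hgE⟩ := huh B hBfg (C.subtype.comp ψ)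
    obtain ⟨h, hhE⟩ := huh B hBfg (D.subtype.comp χ)
    have hg : ∀ b : B, (ψ b : M) = g b := fun b => DFunLike.congr_fun hgE b
    have hh : ∀ b : B, (χ b : M) = h b := fun b => DFunLike.congr_fun hhE b
    set Cs : Set M := ⇑g.symm '' (C : Set M) with hCsdef
    set Ds : Set M := ⇑h.symm '' (D : Set M) with hDsdef
    have hCsfin : Cs.Finite := (hlf C hCfg).image _
    have hDsfin : Ds.Finite := (hlf D hDfg).image _
    have hkey : ∀ a ∈ Ds \ Acl, (MulAction.orbit (autFix L (B : Set M)) a).Infinite := by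
      intro a ha
      refine orbit_infinite_sub K (autFix L (B : Set M)) Acl hAclfin ?_ hinv a ha.2
      intro u hu hfixAll
      exact ⟨hu.1, fun t ht => hfixAll t ht⟩
    obtain ⟨k, hk⟩ := neumann_sep (G := ↥(autFix L (B : Set M))) (hDsfin.diff : (Ds \ Acl).Finite) hCsfin hkey
    obtain ⟨⟨e, he⟩, hfixB⟩ := k.2
    set E : L.Substructure M := Substructure.closure L (Cs ∪ ⇑e '' Ds) with hEdef
    have hEfg : E.FG := Substructure.fg_closure (hCsfin.union (hDsfin.image _))
    have hmemC : ∀ c : C, g.symm.toEmbedding.comp C.subtype c ∈ E := fun c =>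
      Substructure.subset_closure (Or.inl ⟨c, c.2, rfl⟩)
    have hmemD : ∀ d : D, (e.toEmbedding.comp h.symm.toEmbedding).comp D.subtype d ∈ E := fun d =>
      Substructure.subset_closure (Or.inr ⟨h.symm d, ⟨d, d.2, rfl⟩, rfl⟩)
    set ψ' : C ↪[L] E := FirstOrder.Language.Embedding.codRestrict E (g.symm.toEmbedding.comp C.subtype) hmemC
      with hψ'def
    set χ' : D ↪[L] E :=
      FirstOrder.Language.Embedding.codRestrict E ((e.toEmbedding.comp h.symm.toEmbedding).comp D.subtype) hmemD
      with hχ'def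
    have hψ'c : ∀ c : C, (ψ' c : M) = g.symm c := fun _ => rfl
    have hχ'c : ∀ d : D, (χ' d : M) = e (h.symm d) := fun _ => rfl
    have hcomm : ψ'.comp ψ = χ'.comp χ := by
      apply Embedding.ext
      intro b
      apply Subtype.ext
      have h1 : ((ψ'.comp ψ) b : M) = g.symm (ψ b) := rfl
      have h2 : ((χ'.comp χ) b : M) = e (h.symm (χ b)) := rfl
      rw [h1, h2, hg b, hh b, g.symm_apply_apply, h.symm_apply_apply]
      have hbB : (b : M) ∈ Acl := b.2
      exact ((he (b : M)).trans (hfixB _ hbB)).symm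
    refine ⟨E, hEfg, ψ', χ', hcomm, ?_⟩
    apply Set.Subset.antisymm
    · rintro x ⟨⟨c, hc⟩, ⟨d, hd⟩⟩
      have hmc : g.symm (c : M) = (x : M) := congrArg Subtype.val hc
      have hmd : e (h.symm (d : M)) = (x : M) := congrArg Subtype.val hd
      by_cases hacase : h.symm (d : M) ∈ Acl
      · have hea : e (h.symm (d : M)) = h.symm (d : M) :=
          (he _).trans (hfixB _ hacase)
        have hxB : (x : M) ∈ Acl := by rw [← hmd, hea]; exact hacase
        refine ⟨⟨(x : M), hxB⟩, ?_⟩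
        apply Subtype.ext
        show g.symm ((ψ ⟨(x : M), hxB⟩ : M)) = (x : M)
        rw [hg, g.symm_apply_apply]
      · exfalso
        have haDs : h.symm (d : M) ∈ Ds := ⟨d, d.2, rfl⟩
        apply hk _ ⟨haDs, hacase⟩
        have hsm : (k • (h.symm (d : M)) : M) = (x : M) := by
          show (k : Equiv.Perm M) (h.symm (d : M)) = (x : M)
          rw [← he, hmd]
        rw [hsm, ← hmc]
        exact ⟨c, c.2, rfl⟩
    · rintro x ⟨b, rfl⟩
      exact ⟨⟨ψ b, rfl⟩, ⟨χ b, (DFunLike.congr_fun hcomm b).symm⟩⟩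
  · -- CSAP ⇒ finite acl
    intro hcsap S hSfin
    obtain ⟨B, hBfg, ⟨φ₀, -⟩, hsap⟩ := hcsap (Substructure.closure L S)
      (Substructure.fg_closure hSfin)
    have hBfin : (B : Set M).Finite := hlf B hBfg
    obtain ⟨g₀, hg₀E⟩ := huh (Substructure.closure L S) (Substructure.fg_closure hSfin)
      (B.subtype.comp φ₀)
    have hg₀ : ∀ x : Substructure.closure L S, (φ₀ x : M) = g₀ x :=
      fun x => DFunLike.congr_fun hg₀E x
    have hsub : {b : M | {c : M | ∃ g : M ≃[L] M, (∀ s ∈ S, g s = s) ∧ g b = c}.Finite} ⊆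
        ⇑g₀.symm '' (B : Set M) := by
      intro b hb
      by_contra hbn
      have hgb : g₀ b ∉ (B : Set M) := fun hmem => hbn ⟨g₀ b, hmem, g₀.symm_apply_apply b⟩
      set O : Set M := {c : M | ∃ g : M ≃[L] M, (∀ s ∈ S, g s = s) ∧ g b = c} with hOdef
      have hOfin : O.Finite := hb
      have hbO : b ∈ O := ⟨Language.Equiv.refl L M, fun s _ => by simp, by simp⟩
      set D : L.Substructure M := Substructure.closure L ((B : Set M) ∪ ⇑g₀ '' O) with hDdef
      have hDfg : D.FG := Substructure.fg_closure (hBfin.union (hOfin.image _))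
      have hBD : B ≤ D := fun x hx => Substructure.subset_closure (Or.inl hx)
      have hOD : ∀ c ∈ O, g₀ c ∈ D := fun c hc => Substructure.subset_closure (Or.inr ⟨c, hc, rfl⟩)
      obtain ⟨E, hEfg, ψ', χ', hcomm, hrange⟩ := hsap D D hDfg hDfg
        (Substructure.inclusion hBD) (Substructure.inclusion hBD)
      obtain ⟨u, huE⟩ := huh D hDfg (E.subtype.comp ψ')
      obtain ⟨v, hvE⟩ := huh D hDfg (E.subtype.comp χ')
      have hu : ∀ x : D, (ψ' x : M) = u x := fun x => DFunLike.congr_fun huE x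
      have hv : ∀ x : D, (χ' x : M) = v x := fun x => DFunLike.congr_fun hvE x
      set t : M ≃[L] M := v.symm.comp u with htdef
      have htB : ∀ m ∈ (B : Set M), t m = m := by
        intro m hm
        have h1 : ψ' (Substructure.inclusion hBD ⟨m, hm⟩) =
            χ' (Substructure.inclusion hBD ⟨m, hm⟩) := DFunLike.congr_fun hcomm ⟨m, hm⟩
        have h2 : u m = v m := by
          have e1 := hu (Substructure.inclusion hBD ⟨m, hm⟩)
          have e2 := hv (Substructure.inclusion hBD ⟨m, hm⟩)
          have e3 : ((Substructure.inclusion hBD ⟨m, hm⟩ : D) : M) = m := rfl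
          rw [e3] at e1 e2
          rw [← e1, ← e2]
          exact congrArg Subtype.val h1
        show v.symm (u m) = m
        rw [h2, v.symm_apply_apply]
      set r : M ≃[L] M := (g₀.symm.comp t).comp g₀ with hrdef
      have hrS : ∀ s ∈ S, r s = s := by
        intro s hs
        have hsB0 : s ∈ Substructure.closure L S := Substructure.subset_closure hs
        have hg₀s : g₀ s ∈ (B : Set M) := by
          rw [show (g₀ s : M) = g₀ (((⟨s, hsB0⟩ : Substructure.closure L S) : M)) from rfl,
            ← hg₀ ⟨s, hsB0⟩]
          exact (φ₀ ⟨s, hsB0⟩).2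
        show g₀.symm (t (g₀ s)) = s
        rw [htB _ hg₀s, g₀.symm_apply_apply]
      have hrbO : r b ∈ O := ⟨r, hrS, rfl⟩
      have hm1 : g₀ b ∈ D := hOD b hbO
      have hm2 : g₀ (r b) ∈ D := hOD _ hrbO
      have hm2' : t (g₀ b) ∈ D := by
        have heq : g₀ (r b) = t (g₀ b) := by
          show g₀ (g₀.symm (t (g₀ b))) = t (g₀ b)
          rw [g₀.apply_symm_apply]
        rwa [heq] at hm2
      have heq2 : ψ' ⟨g₀ b, hm1⟩ = χ' ⟨t (g₀ b), hm2'⟩ := by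
        apply Subtype.ext
        calc (ψ' ⟨g₀ b, hm1⟩ : M) = u (g₀ b) := hu ⟨g₀ b, hm1⟩
          _ = v (t (g₀ b)) := by
              show u (g₀ b) = v (v.symm (u (g₀ b)))
              rw [v.apply_symm_apply]
          _ = (χ' ⟨t (g₀ b), hm2'⟩ : M) := (hv ⟨t (g₀ b), hm2'⟩).symm
      have hxmem : ψ' ⟨g₀ b, hm1⟩ ∈ Set.range ⇑ψ' ∩ Set.range ⇑χ' :=
        ⟨⟨_, rfl⟩, ⟨_, heq2.symm⟩⟩
      rw [hrange] at hxmem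
      obtain ⟨b', hb'⟩ := hxmem
      have hinj : (Substructure.inclusion hBD) b' = ⟨g₀ b, hm1⟩ := ψ'.injective hb'
      apply hgb
      have hval : ((Substructure.inclusion hBD) b' : M) = g₀ b := congrArg Subtype.val hinj
      rw [← hval]
      exact b'.2
    exact (hBfin.image _).subset hsub
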